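/- The set C = {ab} ∪ {a bⁿ a bⁿ⁺¹ : n ≥ 1} over the alphabet {a,b} is not a strong code: the bi-infinite sequence ⋯(ab)(ab)·(ab²)(ab³)(ab⁴)⋯ admits two distinct factorizations into words of C (up to shift). -/
import Mathlib


inductive AB : Type | a | b
deriving DecidableEq

open AB

/-- A factorization (with phase `k`) of the bi-infinite sequence `x` into words
of `C`: there are positions `p n` with `p 0 = -k`, `0 ≤ k < |c 0|`, each block
`c n` occupying positions `p n, …, p (n+1) - 1` of `x`. -/
def IsBiFactorization (C : Set (List AB)) (x : ℤ → AB)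
    (c : ℤ → List AB) (k : ℕ) : Prop :=
  (∀ n, c n ∈ C) ∧ k < (c 0).length ∧
  ∃ p : ℤ → ℤ, p 0 = -(k : ℤ) ∧ (∀ n, p (n + 1) = p n + (c n).length) ∧
    ∀ (n : ℤ) (i : Fin (c n).length), x (p n + (i : ℕ)) = (c n).get i

/-- `C` is a strong code: every bi-infinite sequence admits at most one
factorization (with phase) into words of `C`. -/
def IsStrongCode (C : Set (List AB)) : Prop :=
  ∀ (x : ℤ → AB) (c c' : ℤ → List AB) (k k' : ℕ),
    IsBiFactorization C x c k → IsBiFactorization C x c' k' → c = c' ∧ k = k'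

/-- The code `{ab} ∪ {a bⁿ a bⁿ⁺¹ : n ≥ 1}`. -/
def C : Set (List AB) :=
  {w | w = [a, b] ∨ ∃ n : ℕ, 1 ≤ n ∧
    w = a :: (List.replicate n b ++ a :: List.replicate (n + 1) b)}

open Classical in
/-- The bi-infinite sequence `⋯(ab)(ab)·(ab²)(ab³)(ab⁴)⋯` : on the left a
periodic `ab` pattern, on the right the concatenation `ab²ab³ab⁴⋯`, whose
letters `a` occur exactly at the positions `m(m+1)/2 - 3` for `m ≥ 2`. -/
noncomputable def xword : ℤ → AB := fun n =>
  if n < 0 then (if Even n then a else b)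
  else (if ∃ m : ℕ, 2 ≤ m ∧ n = (↑(m * (m + 1) / 2) : ℤ) - 3 then a else b)

def Tn (m : ℕ) : ℕ := m * (m + 1) / 2

def W (n : ℕ) : List AB := a :: (List.replicate n b ++ a :: List.replicate (n + 1) b)

lemma W_mem (n : ℕ) (hn : 1 ≤ n) : W n ∈ C := Or.inr ⟨n, hn, rfl⟩

lemma ab_mem : [a, b] ∈ C := Or.inl rfl

lemma W_length (n : ℕ) : (W n).length = 2 * n + 3 := by
  simp [W]; omega

lemma Tsucc (m : ℕ) : Tn (m + 1) = Tn m + (m + 1) := by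
  show (m + 1) * (m + 1 + 1) / 2 = m * (m + 1) / 2 + (m + 1)
  have h : (m + 1) * (m + 1 + 1) = m * (m + 1) + 2 * (m + 1) := by ring
  omega

lemma Tmono : StrictMono Tn :=
  strictMono_nat_of_lt_succ (fun m => by have := Tsucc m; omega)

lemma T2 : Tn 2 = 3 := rfl

lemma xneg_a (q : ℤ) (h : q < 0) (he : Even q) : xword q = a := by
  rw [xword, if_pos h, if_pos he]

lemma xneg_b (q : ℤ) (h : q < 0) (he : ¬ Even q) : xword q = b := by
  rw [xword, if_pos h, if_neg he]

lemma xpos_a (m : ℕ) (hm : 2 ≤ m) : xword ((Tn m : ℤ) - 3) = a := by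
  have h3 : 3 ≤ Tn m := by have := Tmono.monotone hm; simpa [T2] using this
  rw [xword, if_neg (by omega), if_pos ⟨m, hm, rfl⟩]

lemma xpos_b (q : ℤ) (hq : 0 ≤ q) (n : ℕ) (h1 : (Tn n : ℤ) < q + 3)
    (h2 : q + 3 < (Tn (n + 1) : ℤ)) : xword q = b := by
  rw [xword, if_neg (by omega), if_neg]
  rintro ⟨m, hm, hqm⟩
  have hqm' : q = (Tn m : ℤ) - 3 := hqm
  have hnm : n < m := Tmono.lt_iff_lt.mp (by omega)
  have hmn : m < n + 1 := Tmono.lt_iff_lt.mp (by omega)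
  omega

lemma getW (n i : ℕ) (h : i < (W n).length) :
    (W n)[i] = if i = 0 ∨ i = n + 1 then a else b := by
  have key : ∀ (t : ℕ) (ht : t < n + 2), (a :: List.replicate (n + 1) b)[t]'(by simp; omega) = if t = 0 then a else b := by
    intro t ht
    cases t with
    | zero => simp
    | succ u => simp [List.getElem_cons_succ, List.getElem_replicate]
  rw [W_length] at h
  rcases Nat.eq_zero_or_pos i with rfl | hi
  · simp [W]
  obtain ⟨j, rfl⟩ : ∃ j, i = j + 1 := ⟨i - 1, by omega⟩
  show (List.replicate n b ++ a :: List.replicate (n + 1) b)[j]'(by simp; omega) = _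
  rcases lt_or_ge j n with hj | hj
  · rw [List.getElem_append_left (by simpa using hj), List.getElem_replicate,
      if_neg (by omega)]
  · rw [List.getElem_append_right (by simpa using hj)]
    have hlt : j - (List.replicate n b).length < n + 2 := by simp; omega
    rw [key _ hlt]
    simp only [List.length_replicate]
    by_cases hz : j - n = 0
    · rw [if_pos hz, if_pos (by omega)]
    · rw [if_neg hz, if_neg (by omega)]

lemma blockW (n : ℕ) (hn : 2 ≤ n) (i : ℕ) (hi : i < (W n).length) :
    xword ((Tn n : ℤ) - 3 + i) = (W n)[i] := by
  have h3 : 3 ≤ Tn n := by have := Tmono.monotone hn; simpa [T2] using this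
  have hs1 := Tsucc n
  have hs2 := Tsucc (n + 1)
  rw [W_length] at hi
  rw [getW n i (by rw [W_length]; omega)]
  rcases eq_or_ne i 0 with rfl | h0
  · simpa using xpos_a n hn
  rcases eq_or_ne i (n + 1) with rfl | h1
  · have : (Tn n : ℤ) - 3 + (n + 1 : ℕ) = (Tn (n + 1) : ℤ) - 3 := by push_cast; omega
    rw [this, if_pos (Or.inr rfl)]
    exact xpos_a (n + 1) (by omega)
  rw [if_neg (by omega)]
  rcases lt_or_ge i (n + 1) with hc | hc
  · exact xpos_b _ (by push_cast; omega) n (by push_cast; omega) (by push_cast; omega)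
  · exact xpos_b _ (by push_cast; omega) (n + 1) (by push_cast; omega)
      (by push_cast; omega)

def c1 : ℤ → List AB := fun j => if j < 0 then [a, b] else W (2 * j.toNat + 2)
def c2 : ℤ → List AB := fun j => if j < 0 then [a, b] else W (2 * j.toNat + 1)

noncomputable def p1 : ℤ → ℤ := fun j =>
  if j < 0 then 2 * j else (Tn (2 * j.toNat + 2) : ℤ) - 3
noncomputable def p2 : ℤ → ℤ := fun j =>
  if j < 0 then 2 * j - 2 else (Tn (2 * j.toNat + 1) : ℤ) - 3

lemma fact1 : IsBiFactorization C xword c1 0 := by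
  refine ⟨?_, ?_, p1, ?_, ?_, ?_⟩
  · intro n
    by_cases hn : n < 0
    · rw [show c1 n = [a, b] from if_pos hn]; exact ab_mem
    · rw [show c1 n = W (2 * n.toNat + 2) from if_neg hn]; exact W_mem _ (by omega)
  · rw [show c1 0 = W 2 from rfl, W_length]; omega
  · show (Tn 2 : ℤ) - 3 = -(0 : ℕ); norm_num [T2]
  · intro n
    by_cases hn : n < 0
    · by_cases hn1 : n + 1 < 0
      · rw [show p1 (n + 1) = 2 * (n + 1) from if_pos hn1,
          show p1 n = 2 * n from if_pos hn, show c1 n = [a, b] from if_pos hn]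
        simp; ring
      · have : n = -1 := by omega
        subst this
        rw [show p1 (-1 + 1) = p1 0 from rfl, show p1 0 = (Tn 2 : ℤ) - 3 from rfl,
          show p1 (-1) = 2 * (-1) from if_pos hn,
          show c1 (-1) = [a, b] from if_pos hn]
        norm_num [T2]
    · have hn1 : ¬ n + 1 < 0 := by omega
      rw [show p1 (n + 1) = (Tn (2 * (n + 1).toNat + 2) : ℤ) - 3 from if_neg hn1,
        show p1 n = (Tn (2 * n.toNat + 2) : ℤ) - 3 from if_neg hn,
        show c1 n = W (2 * n.toNat + 2) from if_neg hn, W_length]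
      have ht : (n + 1).toNat = n.toNat + 1 := by omega
      rw [ht, show 2 * (n.toNat + 1) + 2 = 2 * n.toNat + 4 from by ring]
      have h1 : Tn (2 * n.toNat + 3) = Tn (2 * n.toNat + 2) + (2 * n.toNat + 3) := by
        have h := Tsucc (2 * n.toNat + 2)
        rwa [show 2 * n.toNat + 2 + 1 = 2 * n.toNat + 3 from by ring] at h
      have h2 : Tn (2 * n.toNat + 4) = Tn (2 * n.toNat + 3) + (2 * n.toNat + 4) := by
        have h := Tsucc (2 * n.toNat + 3)
        rwa [show 2 * n.toNat + 3 + 1 = 2 * n.toNat + 4 from by ring] at h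
      push_cast
      omega
  · intro n
    by_cases hn : n < 0
    · rw [show c1 n = [a, b] from if_pos hn, show p1 n = 2 * n from if_pos hn]
      intro i
      fin_cases i
      · simpa using xneg_a (2 * n) (by omega) ⟨n, by ring⟩
      · have : ¬ Even (2 * n + 1) := by rintro ⟨r, hr⟩; omega
        simpa using xneg_b (2 * n + 1) (by omega) this
    · rw [show c1 n = W (2 * n.toNat + 2) from if_neg hn,
        show p1 n = (Tn (2 * n.toNat + 2) : ℤ) - 3 from if_neg hn]
      intro i
      rw [List.get_eq_getElem]
      exact blockW _ (by omega) i.1 i.2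

lemma fact2 : IsBiFactorization C xword c2 2 := by
  refine ⟨?_, ?_, p2, ?_, ?_, ?_⟩
  · intro n
    by_cases hn : n < 0
    · rw [show c2 n = [a, b] from if_pos hn]; exact ab_mem
    · rw [show c2 n = W (2 * n.toNat + 1) from if_neg hn]; exact W_mem _ (by omega)
  · rw [show c2 0 = W 1 from rfl, W_length]; omega
  · show (Tn 1 : ℤ) - 3 = -(2 : ℕ); norm_num [Tn]
  · intro n
    by_cases hn : n < 0
    · by_cases hn1 : n + 1 < 0
      · rw [show p2 (n + 1) = 2 * (n + 1) - 2 from if_pos hn1,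
          show p2 n = 2 * n - 2 from if_pos hn, show c2 n = [a, b] from if_pos hn]
        simp; ring
      · have : n = -1 := by omega
        subst this
        rw [show p2 (-1 + 1) = p2 0 from rfl, show p2 0 = (Tn 1 : ℤ) - 3 from rfl,
          show p2 (-1) = 2 * (-1) - 2 from if_pos hn,
          show c2 (-1) = [a, b] from if_pos hn]
        norm_num [Tn]
    · have hn1 : ¬ n + 1 < 0 := by omega
      rw [show p2 (n + 1) = (Tn (2 * (n + 1).toNat + 1) : ℤ) - 3 from if_neg hn1,
        show p2 n = (Tn (2 * n.toNat + 1) : ℤ) - 3 from if_neg hn,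
        show c2 n = W (2 * n.toNat + 1) from if_neg hn, W_length]
      have ht : (n + 1).toNat = n.toNat + 1 := by omega
      rw [ht, show 2 * (n.toNat + 1) + 1 = 2 * n.toNat + 3 from by ring]
      have h1 : Tn (2 * n.toNat + 2) = Tn (2 * n.toNat + 1) + (2 * n.toNat + 2) := by
        have h := Tsucc (2 * n.toNat + 1)
        rwa [show 2 * n.toNat + 1 + 1 = 2 * n.toNat + 2 from by ring] at h
      have h2 : Tn (2 * n.toNat + 3) = Tn (2 * n.toNat + 2) + (2 * n.toNat + 3) := by
        have h := Tsucc (2 * n.toNat + 2)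
        rwa [show 2 * n.toNat + 2 + 1 = 2 * n.toNat + 3 from by ring] at h
      push_cast
      omega
  · intro n
    by_cases hn : n < 0
    · rw [show c2 n = [a, b] from if_pos hn, show p2 n = 2 * n - 2 from if_pos hn]
      intro i
      fin_cases i
      · simpa using xneg_a (2 * n - 2) (by omega) ⟨n - 1, by ring⟩
      · have : ¬ Even (2 * n - 2 + 1) := by rintro ⟨r, hr⟩; omega
        simpa using xneg_b (2 * n - 2 + 1) (by omega) this
    · rcases eq_or_lt_of_le (not_lt.mp hn) with h0 | h1
      · subst h0
        rw [show c2 0 = W 1 from rfl, show W 1 = [a, b, a, b, b] from rfl,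
          show p2 0 = -2 from by norm_num [p2, Tn]]
        intro i
        fin_cases i
        · simpa using xneg_a (-2) (by omega) ⟨-1, by ring⟩
        · have : ¬ Even (-2 + (1:ℤ)) := by rintro ⟨r, hr⟩; omega
          simpa using xneg_b (-2 + 1) (by omega) this
        · have := xpos_a 2 le_rfl
          rw [show ((Tn 2 : ℤ) - 3) = 0 from by norm_num [T2]] at this
          simpa using this
        · have := xpos_b 1 (by norm_num) 2 (by norm_num [T2]) (by norm_num [Tn])
          simpa using this
        · have := xpos_b 2 (by norm_num) 2 (by norm_num [T2]) (by norm_num [Tn])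
          simpa using this
      · rw [show c2 n = W (2 * n.toNat + 1) from if_neg hn,
          show p2 n = (Tn (2 * n.toNat + 1) : ℤ) - 3 from if_neg hn]
        intro i
        rw [List.get_eq_getElem]
        exact blockW _ (by omega) i.1 i.2


/-- `C = {ab} ∪ {a bⁿ a bⁿ⁺¹ : n ≥ 1}` is not a strong code: the
sequence `⋯(ab)(ab)·(ab²)(ab³)(ab⁴)⋯` admits two distinct factorizations. -/
theorem stmt2 :
    (∃ (c c' : ℤ → List AB) (k k' : ℕ),
      IsBiFactorization C xword c k ∧ IsBiFactorization C xword c' k' ∧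
      (c ≠ c' ∨ k ≠ k')) ∧
    ¬ IsStrongCode C := by
  refine ⟨⟨c1, c2, 0, 2, fact1, fact2, Or.inr (by omega)⟩, ?_⟩
  intro h
  have hk := (h xword c1 c2 0 2 fact1 fact2).2
  omega
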